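/- For every k ≥ 1 and every n ≥ 1, there exists a structure A satisfying extensionality, boundedness by k (every element has at most k members), existence of the empty set and of all sets of ≤ k elements, acyclicity axioms C_i for all 1 ≤ i < n (no ∈-cycles of length i), but containing an ∈-cycle of length exactly n. Consequently, the theory S_k is not finitely axiomatizable. -/

import Mathlib

open FirstOrder

/-- The relation symbols of the language of set theory: a single binary symbol `∈`. -/
inductive memSym : ℕ → Type
  | mem : memSym 2

/-- The language of set theory: a single binary relation symbol `∈`. -/
def setLang : FirstOrder.Language := ⟨fun _ => Empty, memSym⟩

/-- The membership relation of a `setLang`-structure. -/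
def memRel (M : Type*) [setLang.Structure M] (x y : M) : Prop :=
  FirstOrder.Language.Structure.RelMap (L := setLang) memSym.mem ![x, y]

/-- `r` makes `A` a model of the theory `S_k`: extensionality, boundedness by `k`,
existence of all sets of at most `k` elements (including the empty set), and
acyclicity of `∈` (axioms `C_n` for all `n ≥ 1`). -/
def IsSkModel {A : Type*} (r : A → A → Prop) (k : ℕ) : Prop :=
  (∀ x y : A, (∀ t, r t x ↔ r t y) → x = y) ∧
  (∀ x : A, {t | r t x}.Finite ∧ {t | r t x}.ncard ≤ k) ∧
  (∀ s : Set A, s.Finite → s.ncard ≤ k → ∃ y : A, ∀ t, r t y ↔ t ∈ s) ∧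
  (∀ x : A, ¬ Relation.TransGen r x x)

/-- An `∈`-cycle of length `n`: `x_0 ∈ x_1 ∈ … ∈ x_n = x_0`. -/
def HasCycle {A : Type*} (r : A → A → Prop) (n : ℕ) : Prop :=
  ∃ x : ℕ → A, x n = x 0 ∧ ∀ j < n, r (x j) (x (j + 1))


namespace SkAux

/-- decode a natural into its finset of bit indices -/
def dec (y : ℕ) : Finset ℕ := Finset.equivBitIndices y

lemma dec_injective : Function.Injective dec := Finset.equivBitIndices.injective

lemma dec_symm (F : Finset ℕ) : dec (Finset.equivBitIndices.symm F) = F :=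
  Finset.equivBitIndices.apply_symm_apply F

lemma lt_of_mem_dec {m y : ℕ} (h : m ∈ dec y) : m < y := by
  have h2 : 2 ^ m ≤ y := Nat.two_pow_le_of_mem_bitIndices
    (by simpa [dec, Finset.equivBitIndices] using h)
  exact lt_of_lt_of_le (Nat.lt_two_pow_self (n := m)) h2

/-- canonical codes -/
inductive Canon (k n : ℕ) : ℕ → Prop
  | atom {x : ℕ} (h : x < n) : Canon k n x
  | set {x : ℕ} (h : n ≤ x) (hcard : (dec (x - n)).card ≤ k)
      (hmem : ∀ m ∈ dec (x - n), Canon k n m)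
      (hsing : ∀ p < n, dec (x - n) ≠ {p}) : Canon k n x

/-- membership on codes -/
def memN (n t x : ℕ) : Prop := if x < n then t = (x + n - 1) % n else t ∈ dec (x - n)

lemma succ_pred {n : ℕ} (hn : 0 < n) {p : ℕ} (hp : p < n) :
    ((p + n - 1) % n + 1) % n = p := by
  rw [Nat.mod_add_mod]
  have h1 : p + n - 1 + 1 = p + n := by omega
  rw [h1, Nat.add_mod_right, Nat.mod_eq_of_lt hp]

lemma pred_succ {n : ℕ} (hn : 0 < n) {p : ℕ} (hp : p < n) :
    ((p + 1) % n + n - 1) % n = p := by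
  have h1 : (p + 1) % n + n - 1 = (p + 1) % n + (n - 1) := by
    have := Nat.mod_lt (p + 1) hn
    omega
  rw [h1, Nat.mod_add_mod]
  have h2 : p + 1 + (n - 1) = p + n := by omega
  rw [h2, Nat.add_mod_right, Nat.mod_eq_of_lt hp]

lemma pred_inj {n : ℕ} (hn : 0 < n) {p q : ℕ} (hp : p < n) (hq : q < n)
    (h : (p + n - 1) % n = (q + n - 1) % n) : p = q := by
  have := succ_pred hn hp
  have := succ_pred hn hq
  rw [h] at *
  omega

end SkAux

namespace SkAux

variable {k n : ℕ}

/-- carrier -/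
abbrev Cd (k n : ℕ) : Type := {x : ℕ // Canon k n x}

/-- relation -/
def rel (k n : ℕ) (t x : Cd k n) : Prop := memN n t.1 x.1

lemma rel_atom {x t : Cd k n} (hx : x.1 < n) : rel k n t x ↔ t.1 = (x.1 + n - 1) % n := by
  simp [rel, memN, hx]

lemma rel_set {x t : Cd k n} (hx : n ≤ x.1) : rel k n t x ↔ t.1 ∈ dec (x.1 - n) := by
  simp [rel, memN, Nat.not_lt.2 hx]

lemma canon_set_data' {x : ℕ} (hc : Canon k n x) (hx : n ≤ x) :
    (dec (x - n)).card ≤ k ∧ (∀ m ∈ dec (x - n), Canon k n m) ∧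
      ∀ p < n, dec (x - n) ≠ {p} := by
  cases hc with
  | atom h => exact absurd h (by omega)
  | set h hcard hmem hsing => exact ⟨hcard, hmem, hsing⟩

lemma canon_set_data (x : Cd k n) (hx : n ≤ x.1) :
    (dec (x.1 - n)).card ≤ k ∧ (∀ m ∈ dec (x.1 - n), Canon k n m) ∧
      ∀ p < n, dec (x.1 - n) ≠ {p} :=
  canon_set_data' x.2 hx

section
variable (hn : 0 < n)
include hn

lemma not_atom_set {x y : Cd k n} (hx : x.1 < n) (hy : n ≤ y.1)
    (h : ∀ t, rel k n t x ↔ rel k n t y) : False := by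
  obtain ⟨hc, hm, hs⟩ := canon_set_data y hy
  have hp : (x.1 + n - 1) % n < n := Nat.mod_lt _ hn
  have key : dec (y.1 - n) = {(x.1 + n - 1) % n} := by
    ext m
    simp only [Finset.mem_singleton]
    constructor
    · intro hm'
      have cm : Canon k n m := hm m hm'
      have := (h ⟨m, cm⟩).2 ((rel_set hy).2 hm')
      exact (rel_atom hx).1 this
    · rintro rfl
      have h1 : rel k n ⟨_, Canon.atom hp⟩ x := (rel_atom hx).2 rfl
      exact (rel_set hy).1 ((h _).1 h1)
  exact hs _ hp key

theorem ext_thm (x y : Cd k n) (h : ∀ t, rel k n t x ↔ rel k n t y) : x = y := by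
  by_cases hx : x.1 < n <;> by_cases hy : y.1 < n
  · have hp : (x.1 + n - 1) % n < n := Nat.mod_lt _ hn
    have h1 : rel k n ⟨_, Canon.atom hp⟩ x := (rel_atom hx).2 rfl
    have h2 := (rel_atom hy).1 ((h _).1 h1)
    have h2' : (x.1 + n - 1) % n = (y.1 + n - 1) % n := h2
    exact Subtype.ext (pred_inj hn hx hy h2')
  · exact absurd (not_atom_set hn hx (Nat.not_lt.1 hy) h) not_false
  · exact absurd (not_atom_set hn hy (Nat.not_lt.1 hx) (fun t => (h t).symm)) not_false
  · obtain ⟨_, hmx, _⟩ := canon_set_data x (Nat.not_lt.1 hx)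
    obtain ⟨_, hmy, _⟩ := canon_set_data y (Nat.not_lt.1 hy)
    have key : dec (x.1 - n) = dec (y.1 - n) := by
      ext m
      constructor
      · intro hm'
        exact (rel_set (Nat.not_lt.1 hy)).1 ((h ⟨m, hmx m hm'⟩).1 ((rel_set (Nat.not_lt.1 hx)).2 hm'))
      · intro hm'
        exact (rel_set (Nat.not_lt.1 hx)).1 ((h ⟨m, hmy m hm'⟩).2 ((rel_set (Nat.not_lt.1 hy)).2 hm'))
    have := dec_injective key
    exact Subtype.ext (by omega)

theorem bdd_thm (hk : 1 ≤ k) (x : Cd k n) :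
    {t | rel k n t x}.Finite ∧ {t | rel k n t x}.ncard ≤ k := by
  by_cases hx : x.1 < n
  · have hp : (x.1 + n - 1) % n < n := Nat.mod_lt _ hn
    have hset : {t | rel k n t x} = {⟨_, Canon.atom hp⟩} := by
      ext t
      simp only [Set.mem_setOf_eq, Set.mem_singleton_iff, rel_atom hx]
      exact ⟨fun h => Subtype.ext h, fun h => by rw [h]⟩
    rw [hset]
    simp [Set.ncard_singleton, hk]
  · have hx' : n ≤ x.1 := Nat.not_lt.1 hx
    obtain ⟨hc, hm, _⟩ := canon_set_data x hx'
    have hsub : Subtype.val '' {t | rel k n t x} ⊆ (dec (x.1 - n) : Set ℕ) := by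
      rintro m ⟨t, ht, rfl⟩
      exact (rel_set hx').1 ht
    have himg : (Subtype.val '' {t | rel k n t x}).Finite :=
      Set.Finite.subset (dec (x.1 - n)).finite_toSet hsub
    have hfin : {t | rel k n t x}.Finite :=
      Set.Finite.of_finite_image himg (Subtype.val_injective.injOn)
    refine ⟨hfin, ?_⟩
    calc {t | rel k n t x}.ncard
        = (Subtype.val '' {t | rel k n t x}).ncard :=
          (Set.ncard_image_of_injective _ Subtype.val_injective).symm
      _ ≤ ((dec (x.1 - n) : Set ℕ)).ncard :=
          Set.ncard_le_ncard hsub (dec (x.1 - n)).finite_toSet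
      _ = (dec (x.1 - n)).card := Set.ncard_coe_finset _
      _ ≤ k := hc

theorem V_thm (s : Set (Cd k n)) (hf : s.Finite) (hcard : s.ncard ≤ k) :
    ∃ y, ∀ t, rel k n t y ↔ t ∈ s := by
  by_cases hsing : ∃ p, ∃ hp : p < n, s = {⟨p, Canon.atom hp⟩}
  · obtain ⟨p, hp, rfl⟩ := hsing
    have hq : (p + 1) % n < n := Nat.mod_lt _ hn
    refine ⟨⟨(p + 1) % n, Canon.atom hq⟩, fun t => ?_⟩
    rw [rel_atom (show ((⟨(p+1)%n, Canon.atom hq⟩ : Cd k n)).1 < n from hq)]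
    show t.1 = ((p + 1) % n + n - 1) % n ↔ _
    rw [pred_succ hn hp]
    simp only [Set.mem_singleton_iff]
    exact ⟨fun h => Subtype.ext h, fun h => by rw [h]⟩
  · classical
    set F : Finset ℕ := hf.toFinset.image Subtype.val with hF
    have hFdec : ∀ m, m ∈ F ↔ ∃ t : Cd k n, t ∈ s ∧ t.1 = m := by
      intro m
      simp only [hF, Finset.mem_image, Set.Finite.mem_toFinset]
    set y0 := Finset.equivBitIndices.symm F with hy0
    have hdecF : dec y0 = F := dec_symm F
    have hsub : n + y0 - n = y0 := by omega
    have hcanon : Canon k n (n + y0) := by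
      refine Canon.set (by omega) ?_ ?_ ?_
      · rw [hsub, hdecF, hF, Finset.card_image_of_injective _ Subtype.val_injective,
          ← Set.ncard_eq_toFinset_card s hf]
        exact hcard
      · intro m hm'
        rw [hsub, hdecF] at hm'
        obtain ⟨t, _, rfl⟩ := (hFdec m).1 hm'
        exact t.2
      · intro p hp hEq
        rw [hsub, hdecF] at hEq
        apply hsing
        refine ⟨p, hp, ?_⟩
        have hpF : p ∈ F := by rw [hEq]; exact Finset.mem_singleton_self p
        obtain ⟨t₀, ht₀, ht₀v⟩ := (hFdec p).1 hpF
        ext t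
        simp only [Set.mem_singleton_iff]
        constructor
        · intro ht
          have : t.1 ∈ F := (hFdec t.1).2 ⟨t, ht, rfl⟩
          rw [hEq, Finset.mem_singleton] at this
          exact Subtype.ext this
        · rintro rfl
          have : (⟨p, Canon.atom hp⟩ : Cd k n) = t₀ := Subtype.ext ht₀v.symm
          rw [this]; exact ht₀
    refine ⟨⟨n + y0, hcanon⟩, fun t => ?_⟩
    rw [rel_set (show n ≤ n + y0 by omega)]
    show t.1 ∈ dec (n + y0 - n) ↔ _
    rw [hsub, hdecF, hFdec]
    constructor
    · rintro ⟨u, hu, h⟩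
      rwa [Subtype.ext h.symm]
    · intro h
      exact ⟨t, h, rfl⟩

/-- measure for acyclicity -/
def mval (x : Cd k n) : ℕ := if x.1 < n then 0 else x.1

lemma step_lemma {t x : Cd k n} (h : rel k n t x) :
    (t.1 < n ∧ x.1 < n ∧ t.1 = (x.1 + n - 1) % n) ∨ mval t < mval x := by
  by_cases hx : x.1 < n
  · left
    have ht := (rel_atom hx).1 h
    exact ⟨ht ▸ Nat.mod_lt _ hn, hx, ht⟩
  · right
    have hx' : n ≤ x.1 := Nat.not_lt.1 hx
    have h1 : t.1 < x.1 - n := lt_of_mem_dec ((rel_set hx').1 h)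
    unfold mval
    rw [if_neg hx]
    split <;> omega

theorem no_short_cycle (i : ℕ) (hi : 1 ≤ i) (hin : i < n)
    (x : ℕ → Cd k n) (hx0 : x i = x 0) (hstep : ∀ j < i, rel k n (x j) (x (j + 1))) :
    False := by
  have mono : ∀ b, b ≤ i → ∀ a, a ≤ b → mval (x a) ≤ mval (x b) := by
    intro b
    induction b with
    | zero =>
        intro _ a ha
        obtain rfl : a = 0 := by omega
        exact le_rfl
    | succ b ih =>
        intro hb a ha
        rcases Nat.eq_or_lt_of_le ha with rfl | hlt
        · exact le_rfl
        · have h1 : mval (x a) ≤ mval (x b) := ih (by omega) a (by omega)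
          have h2 : mval (x b) ≤ mval (x (b + 1)) := by
            rcases step_lemma hn (hstep b (by omega)) with h | h
            · simp [mval, h.1, h.2.1]
            · exact le_of_lt h
          exact le_trans h1 h2
  have hall : ∀ j < i, (x (j + 1)).1 < n ∧ (x j).1 = ((x (j + 1)).1 + n - 1) % n := by
    intro j hj
    rcases step_lemma hn (hstep j hj) with h | h
    · exact ⟨h.2.1, h.2.2⟩
    · exfalso
      have h1 : mval (x (j + 1)) ≤ mval (x i) := mono i le_rfl (j + 1) (by omega)
      have h2 : mval (x 0) ≤ mval (x j) := mono j (by omega) 0 (by omega)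
      rw [hx0] at h1
      omega
  have hx0lt : (x 0).1 < n := by
    have h := (hall 0 (by omega)).2
    rw [h]
    exact Nat.mod_lt _ hn
  have hsucc : ∀ j < i, (x (j + 1)).1 = ((x j).1 + 1) % n := by
    intro j hj
    have h := hall j hj
    rw [h.2, succ_pred hn h.1]
  have key : ∀ j ≤ i, (x j).1 = ((x 0).1 + j) % n := by
    intro j
    induction j with
    | zero => intro _; simp [Nat.mod_eq_of_lt hx0lt]
    | succ j ih =>
        intro hj
        rw [hsucc j (by omega), ih (by omega), Nat.mod_add_mod, Nat.add_assoc]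
  have hfin : ((x 0).1 + i) % n = ((x 0).1 + 0) % n := by
    have := key i le_rfl
    rw [hx0] at this
    simp only [Nat.add_zero, Nat.mod_eq_of_lt hx0lt]
    omega
  have hd : i % n = 0 % n := Nat.ModEq.add_left_cancel' _ hfin
  have hdvd : n ∣ i := Nat.dvd_of_mod_eq_zero (by simpa using hd)
  have := Nat.le_of_dvd (by omega) hdvd
  omega

theorem cycle_n :
    ∃ x : ℕ → Cd k n, x n = x 0 ∧ ∀ j < n, rel k n (x j) (x (j + 1)) := by
  refine ⟨fun j => ⟨j % n, Canon.atom (Nat.mod_lt _ hn)⟩, ?_, ?_⟩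
  · exact Subtype.ext (by simp)
  · intro j hj
    have h1 : ((⟨(j+1) % n, Canon.atom (Nat.mod_lt _ hn)⟩ : Cd k n)).1 < n := Nat.mod_lt _ hn
    rw [rel_atom h1]
    show j % n = ((j + 1) % n + n - 1) % n
    rw [pred_succ hn hj, Nat.mod_eq_of_lt hj]

end
end SkAux

namespace SkAux

open FirstOrder.Language FirstOrder.Language.BoundedFormula

/-- variable term -/
abbrev vt {m : ℕ} (i : Fin m) : setLang.Term (Empty ⊕ Fin m) := Term.var (Sum.inr i)

/-- atomic membership formula -/
def memF {m : ℕ} (i j : Fin m) : setLang.BoundedFormula Empty m :=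
  Relations.boundedFormula₂ (memSym.mem : setLang.Relations 2) (vt i) (vt j)

variable {M : Type} [setLang.Structure M]

lemma realize_memF {m : ℕ} (i j : Fin m) (v : Empty → M) (xs : Fin m → M) :
    (memF i j).Realize v xs ↔ memRel M (xs i) (xs j) := by
  rw [memF]
  erw [BoundedFormula.realize_rel₂]
  simp [memRel, vt]

/-- extensionality sentence -/
noncomputable def extS : setLang.Sentence :=
  ((((memF (2 : Fin 3) (0 : Fin 3)).iff (memF (2 : Fin 3) (1 : Fin 3))).all).imp
    (Term.bdEqual (vt (0 : Fin 2)) (vt (1 : Fin 2)))).alls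

lemma realize_extS :
    M ⊨ extS ↔ ∀ x y : M, (∀ t, memRel M t x ↔ memRel M t y) → x = y := by
  unfold Sentence.Realize extS
  rw [BoundedFormula.realize_alls]
  constructor
  · intro h x y hxy
    have := h ![x, y]
    rw [BoundedFormula.realize_imp, BoundedFormula.realize_bdEqual] at this
    simp only [Term.realize_var, Sum.elim_inr] at this
    refine this ?_
    rw [BoundedFormula.realize_all]
    intro t
    rw [BoundedFormula.realize_iff, realize_memF, realize_memF]
    simp [Fin.snoc]
    exact hxy t
  · intro h xs
    rw [BoundedFormula.realize_imp, BoundedFormula.realize_bdEqual]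
    simp only [Term.realize_var, Sum.elim_inr]
    intro hall
    apply h
    intro t
    rw [BoundedFormula.realize_all] at hall
    have := hall t
    rw [BoundedFormula.realize_iff, realize_memF, realize_memF] at this
    simpa [Fin.snoc] using this

end SkAux

namespace SkAux

open FirstOrder.Language FirstOrder.Language.BoundedFormula

variable {M : Type} [setLang.Structure M]

/-- boundedness sentence: among any k+1 members of x, two are equal -/
noncomputable def bddS (k : ℕ) : setLang.Sentence :=
  ((BoundedFormula.iInf
      (fun i : Fin (k + 1) => memF i.castSucc (Fin.last (k + 1)))).imp
    (BoundedFormula.iSup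
      (fun p : {p : Fin (k + 1) × Fin (k + 1) // p.1 ≠ p.2} =>
        Term.bdEqual (vt p.1.1.castSucc) (vt p.1.2.castSucc)))).alls

lemma realize_bddS {k : ℕ} :
    M ⊨ bddS k ↔ ∀ (x : M) (f : Fin (k + 1) → M), (∀ i, memRel M (f i) x) →
      ∃ i j, i ≠ j ∧ f i = f j := by
  unfold Sentence.Realize bddS
  rw [BoundedFormula.realize_alls]
  constructor
  · intro h x f hf
    have := h (Fin.snoc f x)
    rw [BoundedFormula.realize_imp, BoundedFormula.realize_iInf] at this
    have h2 := this ?_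
    · rw [BoundedFormula.realize_iSup] at h2
      obtain ⟨p, hpr⟩ := h2
      rw [BoundedFormula.realize_bdEqual] at hpr
      simp only [Term.realize_var, Sum.elim_inr, Fin.snoc_castSucc] at hpr
      exact ⟨p.1.1, p.1.2, p.2, hpr⟩
    · intro i
      rw [realize_memF]
      simpa [Fin.snoc_castSucc, Fin.snoc_last] using hf i
  · intro h xs
    rw [BoundedFormula.realize_imp, BoundedFormula.realize_iInf]
    intro hall
    have hmem : ∀ i : Fin (k + 1), memRel M (xs i.castSucc) (xs (Fin.last (k + 1))) := by
      intro i
      have := hall i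
      rw [realize_memF] at this
      exact this
    obtain ⟨i, j, hij, he⟩ := h (xs (Fin.last (k + 1))) (fun i => xs i.castSucc) hmem
    rw [BoundedFormula.realize_iSup]
    refine ⟨⟨(i, j), hij⟩, ?_⟩
    rw [BoundedFormula.realize_bdEqual]
    simpa using he

/-- existence of sets of at most k (nonempty) elements -/
noncomputable def vS (k : ℕ) : setLang.Sentence :=
  ((((memF (Fin.last (k + 1)) ((Fin.last k).castSucc)).iff
      (BoundedFormula.iSup
        (fun j : Fin k => Term.bdEqual (vt (Fin.last (k + 1))) (vt j.castSucc.castSucc)))).all).ex).alls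

lemma realize_vS {k : ℕ} :
    M ⊨ vS k ↔ ∀ f : Fin k → M, ∃ y : M, ∀ u, memRel M u y ↔ ∃ j, u = f j := by
  unfold Sentence.Realize vS
  rw [BoundedFormula.realize_alls]
  constructor
  · intro h f
    obtain ⟨y, hy⟩ := (BoundedFormula.realize_ex).1 (h f)
    refine ⟨y, fun u => ?_⟩
    have := (BoundedFormula.realize_all).1 hy u
    rw [BoundedFormula.realize_iff, realize_memF, BoundedFormula.realize_iSup] at this
    simpa [Fin.snoc_castSucc, Fin.snoc_last] using this
  · intro h xs
    obtain ⟨y, hy⟩ := h xs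
    rw [BoundedFormula.realize_ex]
    refine ⟨y, ?_⟩
    rw [BoundedFormula.realize_all]
    intro u
    rw [BoundedFormula.realize_iff, realize_memF, BoundedFormula.realize_iSup]
    simpa [Fin.snoc_castSucc, Fin.snoc_last] using hy u

/-- existence of the empty set -/
noncomputable def emptyS : setLang.Sentence :=
  (((memF (1 : Fin 2) (0 : Fin 2)).not.all).ex).alls

lemma realize_emptyS :
    M ⊨ emptyS ↔ ∃ y : M, ∀ u, ¬ memRel M u y := by
  unfold Sentence.Realize emptyS
  rw [BoundedFormula.realize_alls]
  constructor
  · intro h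
    obtain ⟨y, hy⟩ := (BoundedFormula.realize_ex).1 (h default)
    refine ⟨y, fun u hu => ?_⟩
    have := (BoundedFormula.realize_all).1 hy u
    rw [BoundedFormula.realize_not, realize_memF] at this
    exact this (by simpa [Fin.snoc])
  · intro ⟨y, hy⟩ xs
    rw [BoundedFormula.realize_ex]
    refine ⟨y, ?_⟩
    rw [BoundedFormula.realize_all]
    intro u
    rw [BoundedFormula.realize_not, realize_memF]
    simpa [Fin.snoc] using hy u

/-- cyclic successor on `Fin i` -/
def csucc2 {i : ℕ} (j : Fin i) : Fin i :=
  ⟨(j.1 + 1) % i, Nat.mod_lt _ j.pos⟩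

/-- no cycles of length i -/
noncomputable def cycS (i : ℕ) : setLang.Sentence :=
  ((BoundedFormula.iInf
    (fun j : Fin i => memF j (csucc2 j))).not).alls

lemma realize_cycS {i : ℕ} :
    M ⊨ cycS i ↔ ∀ xs : Fin i → M, ¬ ∀ j, memRel M (xs j) (xs (csucc2 j)) := by
  unfold Sentence.Realize cycS
  rw [BoundedFormula.realize_alls]
  constructor
  · intro h xs hx
    apply (BoundedFormula.realize_not).1 (h xs)
    rw [BoundedFormula.realize_iInf]
    intro j
    rw [realize_memF]
    exact hx j
  · intro h xs
    rw [BoundedFormula.realize_not, BoundedFormula.realize_iInf]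
    intro hall
    apply h xs
    intro j
    have := hall j
    rw [realize_memF] at this
    exact this

end SkAux

namespace SkAux

variable {A : Type*}

lemma card_prop (r : A → A → Prop) (k : ℕ) :
    (∀ x (f : Fin (k + 1) → A), (∀ i, r (f i) x) → ∃ i j, i ≠ j ∧ f i = f j) ↔
      ∀ x : A, {t | r t x}.Finite ∧ {t | r t x}.ncard ≤ k := by
  constructor
  · intro h x
    by_contra hc
    have key : ∃ t : Set A, t ⊆ {t | r t x} ∧ t.Finite ∧ t.ncard = k + 1 := by
      by_cases hfin : {t | r t x}.Finite
      · have hcard : ¬ {t | r t x}.ncard ≤ k := fun hle => hc ⟨hfin, hle⟩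
        obtain ⟨t, hts, htc⟩ := Set.exists_subset_card_eq
          (s := {t | r t x}) (n := k + 1) (by omega)
        exact ⟨t, hts, hfin.subset hts, htc⟩
      · obtain ⟨t, hts, htfin, htc⟩ :=
          (Set.Infinite.exists_subset_ncard_eq hfin (k + 1))
        exact ⟨t, hts, htfin, htc⟩
    obtain ⟨t, hts, htfin, htc⟩ := key
    have hcard : htfin.toFinset.card = k + 1 := by
      rw [← Set.ncard_eq_toFinset_card t htfin]
      exact htc
    let e := Finset.equivFinOfCardEq hcard
    have hfmem : ∀ i : Fin (k + 1), ((e.symm i : htfin.toFinset) : A) ∈ {t | r t x} := by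
      intro i
      apply hts
      have := (e.symm i).2
      rwa [Set.Finite.mem_toFinset] at this
    obtain ⟨i, j, hij, he⟩ := h x (fun i => ((e.symm i : htfin.toFinset) : A)) (fun i => hfmem i)
    apply hij
    apply e.symm.injective
    exact Subtype.ext he
  · intro h x f hf
    by_contra hc
    push_neg at hc
    have hinj : Function.Injective f := by
      intro i j hij
      by_contra hne
      exact hc i j hne hij
    have hsub : Set.range f ⊆ {t | r t x} := by
      rintro _ ⟨i, rfl⟩
      exact hf i
    have h1 : (Set.range f).ncard = k + 1 := by
      rw [← Set.image_univ, Set.ncard_image_of_injective _ hinj, Set.ncard_univ]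
      simp
    have h2 : (Set.range f).ncard ≤ {t | r t x}.ncard :=
      Set.ncard_le_ncard hsub (h x).1
    have h3 := (h x).2
    omega

lemma v_prop (r : A → A → Prop) (k : ℕ)
    (hv : ∀ f : Fin k → A, ∃ y, ∀ u, r u y ↔ ∃ j, u = f j)
    (he : ∃ y, ∀ u, ¬ r u y) :
    ∀ s : Set A, s.Finite → s.ncard ≤ k → ∃ y, ∀ t, r t y ↔ t ∈ s := by
  intro s hf hc
  rcases s.eq_empty_or_nonempty with rfl | ⟨d, hd⟩
  · obtain ⟨y, hy⟩ := he
    exact ⟨y, fun t => by simp [hy t]⟩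
  · set l := hf.toFinset.toList with hl
    have hlen : l.length ≤ k := by
      rw [hl, Finset.length_toList, ← Set.ncard_eq_toFinset_card s hf]
      exact hc
    set f : Fin k → A := fun i => if h : i.1 < l.length then l.get ⟨i.1, h⟩ else d with hfdef
    have hrange : ∀ u, (∃ j : Fin k, u = f j) ↔ u ∈ s := by
      intro u
      constructor
      · rintro ⟨j, rfl⟩
        rw [hfdef]
        dsimp only
        split
        · next h =>
            have hmem : l.get ⟨j.1, h⟩ ∈ l := l.get_mem _
            exact (Set.Finite.mem_toFinset hf).1 (Finset.mem_toList.1 hmem)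
        · exact hd
      · intro hu
        have : u ∈ l := Finset.mem_toList.2 ((Set.Finite.mem_toFinset hf).2 hu)
        obtain ⟨j, hj⟩ := List.mem_iff_get.1 this
        refine ⟨⟨j.1, lt_of_lt_of_le j.2 hlen⟩, ?_⟩
        rw [hfdef]
        dsimp only
        rw [dif_pos j.2]
        exact hj.symm
    obtain ⟨y, hy⟩ := hv f
    exact ⟨y, fun t => (hy t).trans (hrange t)⟩

lemma finCycle_iff (r : A → A → Prop) {i : ℕ} (hi : 1 ≤ i) :
    (∃ xs : Fin i → A, ∀ j, r (xs j) (xs (csucc2 j))) ↔ HasCycle r i := by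
  have hi0 : 0 < i := by omega
  constructor
  · rintro ⟨xs, h⟩
    set fi : ℕ → Fin i := fun m => ⟨m % i, Nat.mod_lt _ hi0⟩ with hfi
    refine ⟨fun m => xs (fi m), ?_, ?_⟩
    · have h1 : fi i = fi 0 := Fin.ext (by simp [hfi])
      dsimp only
      rw [h1]
    · intro j hj
      dsimp only
      have h2 : ∀ (a b : Fin i), b = csucc2 a → r (xs a) (xs b) := by
        rintro a b rfl
        exact h a
      apply h2
      apply Fin.ext
      show (j + 1) % i = ((fi j).1 + 1) % i
      rw [hfi]
      exact (Nat.mod_add_mod j i 1).symm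
  · rintro ⟨x, hx0, hstep⟩
    refine ⟨fun j => x j.1, fun j => ?_⟩
    have hj := j.2
    by_cases hlast : j.1 + 1 = i
    · have h1 : csucc2 j = ⟨0, by omega⟩ := by
        apply Fin.ext
        show (j.1 + 1) % i = 0
        rw [hlast, Nat.mod_self]
      rw [h1]
      have : x 0 = x (j.1 + 1) := by rw [← hx0, hlast]
      dsimp only
      rw [this]
      exact hstep j.1 (by omega)
    · have h1 : csucc2 j = ⟨j.1 + 1, by omega⟩ := by
        apply Fin.ext
        show (j.1 + 1) % i = j.1 + 1
        exact Nat.mod_eq_of_lt (by omega)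
      rw [h1]
      exact hstep j.1 (by omega)

lemma transGen_chain {r : A → A → Prop} {a b : A} (h : Relation.TransGen r a b) :
    ∃ m, 1 ≤ m ∧ ∃ x : ℕ → A, x 0 = a ∧ x m = b ∧ ∀ j < m, r (x j) (x (j + 1)) := by
  induction h with
  | @single c hrel =>
      refine ⟨1, le_rfl, fun j => if j = 0 then a else c, by simp, by simp, ?_⟩
      intro j hj
      have hj0 : j = 0 := by omega
      subst hj0
      simpa using hrel
  | tail hab hbc ih =>
      obtain ⟨m, hm, x, h0, hmb, hstep⟩ := ih
      rename_i c
      refine ⟨m + 1, by omega, fun j => if j ≤ m then x j else c, by simp [h0],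
        by show (if m + 1 ≤ m then x (m + 1) else c) = c; rw [if_neg (by omega)], ?_⟩
      intro j hj
      dsimp only
      by_cases hjm : j < m
      · rw [if_pos (by omega : j ≤ m), if_pos (by omega : j + 1 ≤ m)]
        exact hstep j hjm
      · have hje : j = m := by omega
        subst hje
        rw [if_pos le_rfl, if_neg (by omega), hmb]
        exact hbc

lemma acyclic_iff (r : A → A → Prop) :
    (∀ i, 1 ≤ i → ¬ HasCycle r i) ↔ ∀ x, ¬ Relation.TransGen r x x := by
  constructor
  · intro h x hx
    obtain ⟨m, hm, y, h0, hmb, hstep⟩ := transGen_chain hx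
    exact h m hm ⟨y, by rw [h0, hmb], hstep⟩
  · rintro h i hi ⟨x, hx0, hstep⟩
    have key : ∀ j, 1 ≤ j → j ≤ i → Relation.TransGen r (x 0) (x j) := by
      intro j
      induction j with
      | zero => omega
      | succ j ih =>
          intro _ hj
          rcases Nat.eq_or_lt_of_le (show 1 ≤ j + 1 from by omega) with h1 | h1
          · have : j = 0 := by omega
            subst this
            exact Relation.TransGen.single (hstep 0 (by omega))
          · exact Relation.TransGen.tail (ih (by omega) (by omega)) (hstep j (by omega))
    have := key i hi le_rfl
    rw [hx0] at this
    exact h _ this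

end SkAux


namespace SkAux

/-- make a `setLang` structure from a binary relation -/
def mkStructure {A : Type} (r : A → A → Prop) : setLang.Structure A where
  funMap := fun f _ => f.elim
  RelMap := fun {n} R v => match R with | memSym.mem => r (v 0) (v 1)

lemma memRel_mk {A : Type} (r : A → A → Prop) (x y : A) :
    (@memRel A (mkStructure r)) x y ↔ r x y := Iff.rfl

lemma memRel_mk_eq {A : Type} (r : A → A → Prop) :
    (@memRel A (mkStructure r)) = r :=
  funext fun x => funext fun y => propext (memRel_mk r x y)

open FirstOrder.Language

/-- the theory `S_k` -/
noncomputable def skTheory (k : ℕ) : setLang.Theory :=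
  {extS, bddS k, vS k, emptyS} ∪ (cycS '' {i | 1 ≤ i})

lemma range_ncard_le {M : Type} (k : ℕ) (f : Fin k → M) : (Set.range f).ncard ≤ k := by
  rw [← Set.image_univ]
  calc (f '' Set.univ).ncard ≤ (Set.univ : Set (Fin k)).ncard :=
        Set.ncard_image_le Set.finite_univ
    _ = k := by rw [Set.ncard_univ]; simp

lemma model_skTheory_iff {M : Type} [setLang.Structure M] {k : ℕ} :
    M ⊨ skTheory k ↔ IsSkModel (memRel M) k := by
  rw [FirstOrder.Language.Theory.model_iff]
  constructor
  · intro h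
    have hext := realize_extS.1 (h extS (by simp [skTheory]))
    have hbdd := realize_bddS.1 (h (bddS k) (by simp [skTheory]))
    have hv := realize_vS.1 (h (vS k) (by simp [skTheory]))
    have hem := realize_emptyS.1 (h emptyS (by simp [skTheory]))
    refine ⟨hext, (card_prop _ k).1 hbdd, ?_, ?_⟩
    · apply v_prop _ k ?_ hem
      intro f
      obtain ⟨y, hy⟩ := hv f
      exact ⟨y, hy⟩
    · rw [← acyclic_iff]
      intro i hi hcyc
      have hc := realize_cycS.1 (h (cycS i) (Or.inr ⟨i, hi, rfl⟩))
      obtain ⟨xs, hxs⟩ := (finCycle_iff (memRel M) hi).2 hcyc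
      exact hc xs hxs
  · rintro ⟨hext, hbdd, hv, hacyc⟩ φ hφ
    rcases hφ with hb | ⟨i, hi, rfl⟩
    · rcases hb with rfl | rfl | rfl | rfl
      · exact realize_extS.2 hext
      · exact realize_bddS.2 ((card_prop _ k).2 hbdd)
      · apply realize_vS.2
        intro f
        obtain ⟨y, hy⟩ := hv (Set.range f) (Set.finite_range f) (range_ncard_le k f)
        refine ⟨y, fun u => (hy u).trans ?_⟩
        simp [Set.mem_range, eq_comm]
      · apply realize_emptyS.2
        obtain ⟨y, hy⟩ := hv ∅ Set.finite_empty (by simp)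
        exact ⟨y, fun u hu => by simpa using (hy u).1 hu⟩
    · apply realize_cycS.2
      intro xs hxs
      have hcyc : HasCycle (memRel M) i := (finCycle_iff (memRel M) hi).1 ⟨xs, hxs⟩
      exact ((acyclic_iff (memRel M)).2 hacyc) i hi hcyc

end SkAux

/-- For every `k ≥ 1` and `n ≥ 1` there is a structure satisfying extensionality,
boundedness by `k`, existence of the empty set and of all sets of `≤ k` elements,
no `∈`-cycles of length `i` for `1 ≤ i < n`, but with an `∈`-cycle of length `n`.
Consequently, the theory `S_k` is not finitely axiomatizable. -/
theorem Sk_not_finitely_axiomatizable (k : ℕ) (hk : 1 ≤ k) :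
    (∀ n : ℕ, 1 ≤ n →
      ∃ (A : Type) (r : A → A → Prop),
        (∀ x y : A, (∀ t, r t x ↔ r t y) → x = y) ∧
        (∀ x : A, {t | r t x}.Finite ∧ {t | r t x}.ncard ≤ k) ∧
        (∀ s : Set A, s.Finite → s.ncard ≤ k → ∃ y : A, ∀ t, r t y ↔ t ∈ s) ∧
        (∀ i : ℕ, 1 ≤ i → i < n → ¬ HasCycle r i) ∧
        HasCycle r n) ∧
    ¬ ∃ T₀ : setLang.Theory, T₀.Finite ∧
        ∀ (M : Type) [setLang.Structure M], Nonempty M →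
          (M ⊨ T₀ ↔ IsSkModel (memRel M) k) := by
  classical
  open SkAux in
  have part1 : ∀ n : ℕ, 1 ≤ n →
      (∀ x y : Cd k n, (∀ t, rel k n t x ↔ rel k n t y) → x = y) ∧
      (∀ x : Cd k n, {t | rel k n t x}.Finite ∧ {t | rel k n t x}.ncard ≤ k) ∧
      (∀ s : Set (Cd k n), s.Finite → s.ncard ≤ k →
        ∃ y : Cd k n, ∀ t, rel k n t y ↔ t ∈ s) ∧
      (∀ i : ℕ, 1 ≤ i → i < n → ¬ HasCycle (rel k n) i) ∧
      HasCycle (rel k n) n := by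
    intro n hn
    have hn0 : 0 < n := hn
    refine ⟨fun x y h => ext_thm hn0 x y h, fun x => bdd_thm hn0 hk x,
      fun s hf hc => V_thm hn0 s hf hc, ?_, ?_⟩
    · rintro i hi hin ⟨x, hx0, hstep⟩
      exact no_short_cycle hn0 i hi hin x hx0 hstep
    · exact cycle_n hn0
  constructor
  · intro n hn
    exact ⟨SkAux.Cd k n, SkAux.rel k n, part1 n hn⟩
  · rintro ⟨T₀, hT₀fin, hax⟩
    open SkAux in
    -- every cyclic model fails T₀
    have hfail : ∀ n : ℕ, 1 ≤ n → ∃ ψ ∈ T₀,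
        ¬ (letI := mkStructure (rel k n); (Cd k n) ⊨ ψ) := by
      intro n hn
      letI := mkStructure (rel k n)
      obtain ⟨hext, hbdd, hv, hnocyc, hcyc⟩ := part1 n hn
      have hne : Nonempty (Cd k n) := ⟨⟨0, SkAux.Canon.atom (by omega)⟩⟩
      have hnotsk : ¬ IsSkModel (memRel (Cd k n)) k := by
        rw [memRel_mk_eq]
        rintro ⟨-, -, -, hacyc⟩
        exact ((acyclic_iff (rel k n)).2 hacyc) n hn hcyc
      have hnotT₀ : ¬ ((Cd k n) ⊨ T₀) := fun hmod => hnotsk ((hax _ hne).1 hmod)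
      rw [FirstOrder.Language.Theory.model_iff] at hnotT₀
      push_neg at hnotT₀
      exact hnotT₀
    -- pigeonhole: some ψ ∈ T₀ fails in infinitely many models
    have hpigeon : ∃ ψ ∈ T₀,
        {n : ℕ | 1 ≤ n ∧ ¬ (letI := mkStructure (rel k n); (Cd k n) ⊨ ψ)}.Infinite := by
      by_contra hcon
      push_neg at hcon
      have hsub : (Set.Ici 1 : Set ℕ) ⊆
          ⋃ ψ ∈ T₀, {n : ℕ | 1 ≤ n ∧ ¬ (letI := mkStructure (rel k n); (Cd k n) ⊨ ψ)} := by
        intro n hn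
        obtain ⟨ψ, hψ, hnψ⟩ := hfail n hn
        exact Set.mem_biUnion hψ ⟨hn, hnψ⟩
      have : (Set.Ici 1 : Set ℕ).Finite :=
        Set.Finite.subset (Set.Finite.biUnion hT₀fin (fun ψ hψ => hcon ψ hψ)) hsub
      exact Set.Ici_infinite 1 this
    obtain ⟨ψ, hψT₀, hψinf⟩ := hpigeon
    -- the theory skTheory k ∪ {ψ.not} is finitely satisfiable
    have hfinsat : (skTheory k ∪ {FirstOrder.Language.Formula.not ψ}).IsFinitelySatisfiable := by
      intro T0 hT0
      let w : setLang.Sentence → ℕ := fun φ =>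
        if h : ∃ i, 1 ≤ i ∧ φ = cycS i then h.choose else 0
      obtain ⟨n, hnmem, hngt⟩ := hψinf.exists_gt (T0.sup w + 1)
      obtain ⟨hn1, hnψ⟩ := hnmem
      have hn0 : 0 < n := hn1
      letI := mkStructure (rel k n)
      haveI : Nonempty (Cd k n) := ⟨⟨0, SkAux.Canon.atom (by omega)⟩⟩
      obtain ⟨hext, hbdd, hv, hnocyc, hcyc⟩ := part1 n hn1
      have hmemrel : memRel (Cd k n) = rel k n := memRel_mk_eq _
      haveI hmodel : (Cd k n) ⊨ (T0 : setLang.Theory) := by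
        rw [FirstOrder.Language.Theory.model_iff]
        intro φ hφ
        rcases hT0 hφ with hsk | hψnot
        · rcases hsk with hb | ⟨i, hi, rfl⟩
          · rcases hb with rfl | rfl | rfl | rfl
            · exact realize_extS.2 (by rw [hmemrel]; exact hext)
            · exact realize_bddS.2 (by rw [hmemrel]; exact (card_prop _ k).2 hbdd)
            · apply realize_vS.2
              rw [hmemrel]
              intro f
              obtain ⟨y, hy⟩ := hv (Set.range f) (Set.finite_range f) (range_ncard_le k f)
              refine ⟨y, fun u => (hy u).trans ?_⟩
              simp [Set.mem_range, eq_comm]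
            · apply realize_emptyS.2
              rw [hmemrel]
              obtain ⟨y, hy⟩ := hv ∅ Set.finite_empty (by simp)
              exact ⟨y, fun u hu => by simpa using (hy u).1 hu⟩
          · -- φ = cycS i with 1 ≤ i; bound i via w
            have hex : ∃ i', 1 ≤ i' ∧ cycS i = cycS i' := ⟨i, hi, rfl⟩
            have hw : w (cycS i) = hex.choose := dif_pos hex
            obtain ⟨hi', heq⟩ := hex.choose_spec
            have hle : w (cycS i) ≤ T0.sup w := Finset.le_sup hφ
            have hi'lt : hex.choose < n := by omega
            rw [heq]
            apply realize_cycS.2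
            intro xs hxs
            rw [hmemrel] at hxs
            have : HasCycle (rel k n) hex.choose :=
              (finCycle_iff (rel k n) hi').1 ⟨xs, hxs⟩
            exact hnocyc hex.choose hi' hi'lt this
        · rw [Set.mem_singleton_iff] at hψnot
          subst hψnot
          rw [FirstOrder.Language.Sentence.realize_not]
          exact hnψ
      exact ⟨FirstOrder.Language.Theory.ModelType.of _ (Cd k n)⟩
    have hsat := FirstOrder.Language.Theory.isSatisfiable_iff_isFinitelySatisfiable.2 hfinsat
    obtain ⟨M⟩ := hsat
    have hModelUnion : M ⊨ (skTheory k ∪ {FirstOrder.Language.Formula.not ψ}) := M.is_model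
    have hModelSk : M ⊨ skTheory k :=
      hModelUnion.mono Set.subset_union_left
    have hsk : IsSkModel (memRel M) k := model_skTheory_iff.1 hModelSk
    have hMT₀ : M ⊨ T₀ := (hax M M.nonempty').2 hsk
    have hMψ : (M : Type) ⊨ ψ := hMT₀.realize_of_mem ψ hψT₀
    have hMψn : (M : Type) ⊨ FirstOrder.Language.Formula.not ψ :=
      hModelUnion.realize_of_mem _ (Set.mem_union_right _ rfl)
    rw [FirstOrder.Language.Sentence.realize_not] at hMψn
    exact hMψn hMψ
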